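/- arXiv:2604.03170 — 3 statements merged into one kernel-verified Lean document; each statement's English description precedes it below -/
import Mathlib

section
/- Let s : [0, ∞) → [0, 1] be nonincreasing and continuous with A_s = ∫₀^∞ s(t) dt < ∞, B_s = A_s/2, H_s(x) = x·s(x) + ∫_x^∞ s(t) dt, a > 0 with H_s(a) = B_s, p₀ = s(a), and envelope J_s(u) = B_s − p₀·u for 0 ≤ u ≤ a, J_s(u) = ∫_u^∞ s(t) dt for u ≥ a. Let X be integrable with E[X] = 0 and P(|X| > t) ≤ s(t) for all t ≥ 0, and let Y be integrable and symmetric about 0 (Y and −Y have the same law). If g_Y(u) := E[(Y − u)₊] ≥ J_s(u) for all u ≥ 0, then X ⪯_cx Y, i.e., E[f(X)] ≤ E[f(Y)] for every convex f : ℝ → ℝ for which both expectations are finite. -/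
open MeasureTheory Set

open Filter



noncomputable def subgr (f : ℝ → ℝ) (t : ℝ) : ℝ :=
  sSup ((fun u => (f t - f u) / (t - u)) '' Iio t)

section subgr
variable {f : ℝ → ℝ}

lemma slope_adj (hf : ConvexOn ℝ Set.univ f) {x y z : ℝ} (hxy : x < y) (hyz : y < z) :
    (f y - f x) / (y - x) ≤ (f z - f y) / (z - y) :=
  hf.slope_mono_adjacent (Set.mem_univ x) (Set.mem_univ z) hxy hyz

lemma subgr_bdd (hf : ConvexOn ℝ Set.univ f) (t : ℝ) : BddAbove ((fun u => (f t - f u) / (t - u)) '' Iio t) := by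
  refine ⟨(f (t+1) - f t) / (t + 1 - t), ?_⟩
  rintro y ⟨u, hu, rfl⟩
  exact slope_adj hf hu (by linarith)

lemma subgr_tangent (hf : ConvexOn ℝ Set.univ f) (t x : ℝ) : f t + subgr f t * (x - t) ≤ f x := by
  rcases lt_trichotomy x t with h | h | h
  · have h1 : (f t - f x) / (t - x) ≤ subgr f t :=
      le_csSup (subgr_bdd hf t) ⟨x, h, rfl⟩
    have htx : (0:ℝ) < t - x := by linarith
    rw [div_le_iff₀ htx] at h1
    nlinarith
  · simp [h]
  · have h1 : subgr f t ≤ (f x - f t) / (x - t) := by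
      apply csSup_le ((nonempty_Iio).image _)
      rintro y ⟨u, hu, rfl⟩
      exact slope_adj hf hu h
    have htx : (0:ℝ) < x - t := by linarith
    rw [le_div_iff₀ htx] at h1
    nlinarith

lemma subgr_mono (hf : ConvexOn ℝ Set.univ f) : Monotone (subgr f) := by
  intro t t' htt'
  rcases eq_or_lt_of_le htt' with rfl | h
  · exact le_refl _
  · have h1 : subgr f t ≤ (f t' - f t) / (t' - t) := by
      apply csSup_le ((nonempty_Iio).image _)
      rintro y ⟨u, hu, rfl⟩
      exact slope_adj hf hu h
    exact h1.trans (le_csSup (subgr_bdd hf t') ⟨t, h, rfl⟩)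

end subgr

noncomputable def tgl (f : ℝ → ℝ) (t x : ℝ) : ℝ := f t + subgr f t * (x - t)

noncomputable def crossPt (f : ℝ → ℝ) (t₀ t₁ : ℝ) : ℝ :=
  if subgr f t₁ = subgr f t₀ then t₁
  else (f t₀ - f t₁ - subgr f t₀ * t₀ + subgr f t₁ * t₁) / (subgr f t₁ - subgr f t₀)

lemma tgl_le {f : ℝ → ℝ} (hf : ConvexOn ℝ Set.univ f) (t x : ℝ) : tgl f t x ≤ f x :=
  subgr_tangent hf t x

lemma tgl_self (f : ℝ → ℝ) (t : ℝ) : tgl f t t = f t := by simp [tgl]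

lemma cross_id {f : ℝ → ℝ} (hf : ConvexOn ℝ Set.univ f) {t₀ t₁ : ℝ} (h01 : t₀ < t₁) (x : ℝ) :
    (subgr f t₁ - subgr f t₀) * (x - crossPt f t₀ t₁) = tgl f t₁ x - tgl f t₀ x := by
  unfold crossPt
  split_ifs with h
  · have h1 := subgr_tangent hf t₀ t₁
    have h2 := subgr_tangent hf t₁ t₀
    unfold tgl at *
    rw [h] at *
    nlinarith
  · have hne : subgr f t₁ - subgr f t₀ ≠ 0 := sub_ne_zero.mpr h
    unfold tgl
    field_simp
    ring
lemma crossPt_mem {f : ℝ → ℝ} (hf : ConvexOn ℝ Set.univ f) {t₀ t₁ : ℝ} (h01 : t₀ < t₁) :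
    t₀ ≤ crossPt f t₀ t₁ ∧ crossPt f t₀ t₁ ≤ t₁ := by
  have hd : subgr f t₀ ≤ subgr f t₁ := subgr_mono hf h01.le
  rcases eq_or_lt_of_le hd with heq | hlt
  · rw [crossPt, if_pos heq.symm]; exact ⟨h01.le, le_refl _⟩
  · have hpos : 0 < subgr f t₁ - subgr f t₀ := by linarith
    constructor
    · have h1 := cross_id hf h01 t₀
      rw [tgl_self] at h1
      have h2 : tgl f t₁ t₀ ≤ f t₀ := subgr_tangent hf t₁ t₀
      nlinarith
    · have h1 := cross_id hf h01 t₁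
      rw [tgl_self] at h1
      have h2 : tgl f t₀ t₁ ≤ f t₁ := subgr_tangent hf t₀ t₁
      nlinarith

noncomputable def gridt (n k : ℕ) : ℝ := (k:ℝ)/(n+1) - (n+1)
def mm (n : ℕ) : ℕ := 2*(n+1)^2
noncomputable def cc (f : ℝ → ℝ) (n k : ℕ) : ℝ := crossPt f (gridt n k) (gridt n (k+1))
noncomputable def happ (f : ℝ → ℝ) (n : ℕ) (x : ℝ) : ℝ :=
  tgl f (gridt n 0) x + ∑ k ∈ Finset.range (mm n),
    (subgr f (gridt n (k+1)) - subgr f (gridt n k)) * max (x - cc f n k) 0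

lemma gridt_lt (n : ℕ) {k l : ℕ} (h : k < l) : gridt n k < gridt n l := by
  unfold gridt
  have h1 : (k:ℝ) < l := Nat.cast_lt.mpr h
  have hn : (0:ℝ) < n + 1 := by positivity
  have h2 : (k:ℝ)/(n+1) < (l:ℝ)/(n+1) := div_lt_div_of_pos_right h1 hn
  linarith

lemma gridt_succ_lt (n k : ℕ) : gridt n k < gridt n (k+1) := gridt_lt n (lt_add_one k)

lemma coeff_nonneg {f : ℝ → ℝ} (hf : ConvexOn ℝ Set.univ f) (n k : ℕ) :
    0 ≤ subgr f (gridt n (k+1)) - subgr f (gridt n k) :=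
  sub_nonneg.mpr (subgr_mono hf (gridt_succ_lt n k).le)

lemma cc_mem {f : ℝ → ℝ} (hf : ConvexOn ℝ Set.univ f) (n k : ℕ) :
    gridt n k ≤ cc f n k ∧ cc f n k ≤ gridt n (k+1) :=
  crossPt_mem hf (gridt_succ_lt n k)

lemma cc_mono {f : ℝ → ℝ} (hf : ConvexOn ℝ Set.univ f) (n : ℕ) : Monotone (cc f n) :=
  monotone_nat_of_le_succ fun k => (cc_mem hf n k).2.trans (cc_mem hf n (k+1)).1

lemma tele_sum {f : ℝ → ℝ} (hf : ConvexOn ℝ Set.univ f) (n j : ℕ) (x : ℝ) :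
    ∑ k ∈ Finset.range j,
      (subgr f (gridt n (k+1)) - subgr f (gridt n k)) * (x - cc f n k)
    = tgl f (gridt n j) x - tgl f (gridt n 0) x := by
  have h1 : ∀ k ∈ Finset.range j,
      (subgr f (gridt n (k+1)) - subgr f (gridt n k)) * (x - cc f n k)
      = tgl f (gridt n (k+1)) x - tgl f (gridt n k) x :=
    fun k _ => cross_id hf (gridt_succ_lt n k) x
  rw [Finset.sum_congr rfl h1]
  exact Finset.sum_range_sub (fun k => tgl f (gridt n k) x) j

lemma happ_ge {f : ℝ → ℝ} (hf : ConvexOn ℝ Set.univ f) (n j : ℕ) (hj : j ≤ mm n) (x : ℝ) :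
    tgl f (gridt n j) x ≤ happ f n x := by
  have h1 : ∑ k ∈ Finset.range j,
      (subgr f (gridt n (k+1)) - subgr f (gridt n k)) * (x - cc f n k)
      ≤ ∑ k ∈ Finset.range j,
      (subgr f (gridt n (k+1)) - subgr f (gridt n k)) * max (x - cc f n k) 0 :=
    Finset.sum_le_sum fun k _ =>
      mul_le_mul_of_nonneg_left (le_max_left _ _) (coeff_nonneg hf n k)
  have h2 : ∑ k ∈ Finset.range j,
      (subgr f (gridt n (k+1)) - subgr f (gridt n k)) * max (x - cc f n k) 0
      ≤ ∑ k ∈ Finset.range (mm n),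
      (subgr f (gridt n (k+1)) - subgr f (gridt n k)) * max (x - cc f n k) 0 :=
    Finset.sum_le_sum_of_subset_of_nonneg (Finset.range_subset_range.mpr hj)
      (fun k _ _ => mul_nonneg (coeff_nonneg hf n k) (le_max_right _ _))
  have h3 := tele_sum hf n j x
  unfold happ
  linarith

lemma happ_le {f : ℝ → ℝ} (hf : ConvexOn ℝ Set.univ f) (n : ℕ) (x : ℝ) :
    happ f n x ≤ f x := by
  classical
  set S := (Finset.range (mm n + 1)).filter (fun k => k = 0 ∨ cc f n (k-1) ≤ x) with hS
  have h0S : (0:ℕ) ∈ S := by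
    rw [hS, Finset.mem_filter]
    exact ⟨Finset.mem_range.mpr (by omega), Or.inl rfl⟩
  have hSne : S.Nonempty := ⟨0, h0S⟩
  set j := S.max' hSne with hj
  have hjS : j ∈ S := Finset.max'_mem _ _
  have hjm : j ≤ mm n := by
    have := Finset.mem_range.mp (Finset.mem_filter.mp hjS).1
    omega
  have hcjx : ∀ k, k < j → cc f n k ≤ x := by
    intro k hk
    have hj0 : j ≠ 0 := by omega
    have := (Finset.mem_filter.mp hjS).2
    rcases this with h | h
    · exact absurd h hj0
    · exact (cc_mono hf n (by omega : k ≤ j - 1)).trans h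
  have hgt : ∀ k, k ∈ Finset.range (mm n) → k ∉ Finset.range j → x < cc f n k := by
    intro k hkm hkj
    have hkge : j ≤ k := by simpa using Nat.le_of_not_lt (by simpa using hkj)
    have hmem : k + 1 ∈ Finset.range (mm n + 1) := by
      simp at hkm ⊢; omega
    by_contra hx
    push_neg at hx
    have : k + 1 ∈ S := Finset.mem_filter.mpr ⟨hmem, Or.inr (by simpa using hx)⟩
    have := Finset.le_max' S (k+1) this
    omega
  have key : ∑ k ∈ Finset.range (mm n),
      (subgr f (gridt n (k+1)) - subgr f (gridt n k)) * max (x - cc f n k) 0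
      = ∑ k ∈ Finset.range j,
      (subgr f (gridt n (k+1)) - subgr f (gridt n k)) * (x - cc f n k) := by
    rw [← Finset.sum_subset (Finset.range_subset_range.mpr hjm)
      (fun k hk hks => by
        have := hgt k hk hks
        rw [max_eq_right (by linarith), mul_zero])]
    exact Finset.sum_congr rfl fun k hk => by
      rw [max_eq_left (by linarith [hcjx k (Finset.mem_range.mp hk)])]
  have h3 := tele_sum hf n j x
  have h4 := subgr_tangent hf (gridt n j) x
  unfold happ
  rw [key]
  unfold tgl at *
  linarith

lemma gridt_sq (n : ℕ) : gridt n ((n+1)^2) = 0 := by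
  unfold gridt
  have hn : ((n:ℝ)+1) ≠ 0 := by positivity
  field_simp
  push_cast
  ring

lemma happ_ge_zero {f : ℝ → ℝ} (hf : ConvexOn ℝ Set.univ f) (n : ℕ) (x : ℝ) :
    tgl f 0 x ≤ happ f n x := by
  have h := happ_ge hf n ((n+1)^2)
    (by unfold mm; exact Nat.le_mul_of_pos_left _ (by norm_num)) x
  rwa [gridt_sq] at h

lemma happ_tendsto {f : ℝ → ℝ} (hf : ConvexOn ℝ Set.univ f) (x : ℝ) :
    Tendsto (fun n => happ f n x) atTop (nhds (f x)) := by
  have hcont : Continuous f := hf.locallyLipschitz.continuous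
  set kk : ℕ → ℕ := fun n => ⌊(x + (n+1)) * (n+1)⌋₊ with hkk
  set tk : ℕ → ℝ := fun n => gridt n (kk n) with htk
  set C : ℝ := max |subgr f (x-1)| |subgr f (x+1)| with hC
  have hC0 : 0 ≤ C := le_trans (abs_nonneg _) (le_max_left _ _)
  -- eventual facts
  have hev : ∀ᶠ n : ℕ in atTop, |x| ≤ (n:ℝ) + 1 := by
    filter_upwards [eventually_ge_atTop ⌈|x|⌉₊] with n hn
    calc |x| ≤ (⌈|x|⌉₊ : ℝ) := Nat.le_ceil _
      _ ≤ (n:ℝ) := Nat.cast_le.mpr hn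
      _ ≤ (n:ℝ) + 1 := by linarith
  have hfacts : ∀ᶠ n : ℕ in atTop,
      tk n ≤ x ∧ x - tk n ≤ 1/((n:ℝ)+1) ∧ kk n ≤ mm n := by
    filter_upwards [hev] with n hn
    have hn1 : (0:ℝ) < (n:ℝ) + 1 := by positivity
    have hx1 : 0 ≤ x + ((n:ℝ)+1) := by
      have := neg_abs_le x; linarith
    have hfl1 : ((kk n : ℝ)) ≤ (x + ((n:ℝ)+1)) * ((n:ℝ)+1) := by
      rw [hkk]; push_cast
      exact Nat.floor_le (by positivity)
    have hfl2 : (x + ((n:ℝ)+1)) * ((n:ℝ)+1) < (kk n : ℝ) + 1 := by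
      rw [hkk]; push_cast
      exact Nat.lt_floor_add_one _
    refine ⟨?_, ?_, ?_⟩
    · rw [htk]; unfold gridt
      rw [sub_le_iff_le_add, div_le_iff₀ hn1]
      push_cast
      nlinarith
    · rw [htk]; unfold gridt
      rw [sub_le_iff_le_add]
      have h2 : x + ((n:ℝ)+1) < ((kk n : ℝ) + 1) / ((n:ℝ)+1) := by
        rw [lt_div_iff₀ hn1]; push_cast at hfl2 ⊢; linarith
      push_cast at h2 ⊢
      have h3 : ((kk n :ℝ) + 1) / ((n:ℝ)+1) = (kk n : ℝ)/((n:ℝ)+1) + 1/((n:ℝ)+1) := by ring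
      linarith [h2, h3 ▸ h2]
    · have hcast : ((kk n : ℝ)) ≤ 2 * ((n:ℝ)+1)^2 := by
        have hx2 : x ≤ (n:ℝ) + 1 := (le_abs_self x).trans hn
        nlinarith
      have : ((kk n : ℝ)) ≤ ((mm n : ℝ)) := by
        unfold mm; push_cast; linarith
      exact_mod_cast this
  -- lower bound sequence
  have hlow : ∀ᶠ n : ℕ in atTop, f (tk n) - C * (1/((n:ℝ)+1)) ≤ happ f n x := by
    filter_upwards [hfacts] with n hn
    obtain ⟨h1, h2, h3⟩ := hn
    have hge := happ_ge hf n (kk n) h3 x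
    have htgl : tgl f (tk n) x = f (tk n) + subgr f (tk n) * (x - tk n) := rfl
    have hd1 : subgr f (x-1) ≤ subgr f (tk n) := by
      apply subgr_mono hf
      have hn1 : (0:ℝ) < (n:ℝ)+1 := by positivity
      have : 1/((n:ℝ)+1) ≤ 1 := by
        rw [div_le_one hn1]; linarith
      linarith
    have hd2 : -C ≤ subgr f (tk n) := by
      have := neg_abs_le (subgr f (x-1))
      have := le_max_left |subgr f (x-1)| |subgr f (x+1)|
      linarith
    have h0 : 0 ≤ x - tk n := by linarith
    have : -(C * (1/((n:ℝ)+1))) ≤ subgr f (tk n) * (x - tk n) := by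
      nlinarith
    have hge2 : f (tk n) + subgr f (tk n) * (x - tk n) ≤ happ f n x := by
      rw [← htgl]; exact hge
    linarith
  have hupp : ∀ᶠ n : ℕ in atTop, happ f n x ≤ f x :=
    Eventually.of_forall fun n => happ_le hf n x
  -- tk → x
  have htkx : Tendsto tk atTop (nhds x) := by
    have h1 : Tendsto (fun n : ℕ => x - 1/((n:ℝ)+1)) atTop (nhds x) := by
      have := tendsto_one_div_add_atTop_nhds_zero_nat (𝕜 := ℝ)
      have := (tendsto_const_nhds (x := x) (f := atTop (α := ℕ))).sub this
      simpa using this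
    refine tendsto_of_tendsto_of_tendsto_of_le_of_le' h1 tendsto_const_nhds ?_ ?_
    · filter_upwards [hfacts] with n hn; linarith [hn.2.1]
    · filter_upwards [hfacts] with n hn; exact hn.1
  have hftk : Tendsto (fun n => f (tk n)) atTop (nhds (f x)) :=
    (hcont.continuousAt.tendsto).comp htkx
  have hCn : Tendsto (fun n : ℕ => C * (1/((n:ℝ)+1))) atTop (nhds 0) := by
    have := (tendsto_one_div_add_atTop_nhds_zero_nat (𝕜 := ℝ)).const_mul C
    simpa using this
  have hlowt : Tendsto (fun n => f (tk n) - C * (1/((n:ℝ)+1))) atTop (nhds (f x)) := by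
    have := hftk.sub hCn
    simpa using this
  exact tendsto_of_tendsto_of_tendsto_of_le_of_le' hlowt tendsto_const_nhds hlow hupp

lemma happ_comp_integrable {f : ℝ → ℝ} {Ω : Type*} [MeasurableSpace Ω]
    {μ : Measure Ω} [IsProbabilityMeasure μ] {Z : Ω → ℝ} (hZ : Integrable Z μ) (n : ℕ) :
    Integrable (fun ω => happ f n (Z ω)) μ := by
  unfold happ tgl
  apply Integrable.add
  · exact (integrable_const _).add ((hZ.sub (integrable_const _)).const_mul _)
  · apply integrable_finset_sum
    intro k _
    exact ((hZ.sub (integrable_const _)).pos_part).const_mul _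

lemma happ_integral {f : ℝ → ℝ} {Ω : Type*} [MeasurableSpace Ω]
    {μ : Measure Ω} [IsProbabilityMeasure μ] {Z : Ω → ℝ} (hZ : Integrable Z μ)
    (hmean : ∫ ω, Z ω ∂μ = 0) (n : ℕ) :
    ∫ ω, happ f n (Z ω) ∂μ =
      (f (gridt n 0) + subgr f (gridt n 0) * (0 - gridt n 0)) +
      ∑ k ∈ Finset.range (mm n),
        (subgr f (gridt n (k+1)) - subgr f (gridt n k)) *
          ∫ ω, max (Z ω - cc f n k) 0 ∂μ := by
  unfold happ tgl
  have hi1a : Integrable (fun ω => subgr f (gridt n 0) * (Z ω - gridt n 0)) μ :=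
    (hZ.sub (integrable_const _)).const_mul _
  have hi1 : Integrable (fun ω => f (gridt n 0) + subgr f (gridt n 0) * (Z ω - gridt n 0)) μ :=
    (integrable_const _).add hi1a
  have hi2k : ∀ k : ℕ, Integrable (fun ω =>
      (subgr f (gridt n (k+1)) - subgr f (gridt n k)) * max (Z ω - cc f n k) 0) μ :=
    fun k => ((hZ.sub (integrable_const _)).pos_part).const_mul _
  have hi2 : Integrable (fun ω => ∑ k ∈ Finset.range (mm n),
      (subgr f (gridt n (k+1)) - subgr f (gridt n k)) * max (Z ω - cc f n k) 0) μ :=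
    integrable_finset_sum _ fun k _ => hi2k k
  rw [integral_add hi1 hi2]
  congr 1
  · rw [integral_add (integrable_const _) hi1a, integral_const, integral_const_mul,
      integral_sub hZ (integrable_const _), hmean, integral_const]
    simp [measure_univ]
  · rw [integral_finset_sum _ fun k _ => hi2k k]
    exact Finset.sum_congr rfl fun k _ => integral_const_mul _ _

lemma happ_integral_tendsto {f : ℝ → ℝ} (hf : ConvexOn ℝ Set.univ f)
    {Ωz : Type*} [MeasurableSpace Ωz] (ν : Measure Ωz) [IsProbabilityMeasure ν]
    (Z : Ωz → ℝ) (hZ : Integrable Z ν) (hfZ : Integrable (fun ω => f (Z ω)) ν) :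
    Tendsto (fun n => ∫ ω, happ f n (Z ω) ∂ν) atTop (nhds (∫ ω, f (Z ω) ∂ν)) := by
  have htglZ : Integrable (fun ω => tgl f 0 (Z ω)) ν := by
    unfold tgl
    exact (integrable_const _).add ((hZ.sub (integrable_const _)).const_mul _)
  apply tendsto_integral_of_dominated_convergence
    (fun ω => |f (Z ω)| + |tgl f 0 (Z ω)|)
    (fun n => (happ_comp_integrable hZ n).aestronglyMeasurable)
    (hfZ.abs.add htglZ.abs)
  · intro n
    refine Eventually.of_forall fun ω => ?_
    rw [Real.norm_eq_abs, abs_le]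
    constructor
    · have h1 := happ_ge_zero hf n (Z ω)
      have h2 := neg_abs_le (tgl f 0 (Z ω))
      have h3 := abs_nonneg (f (Z ω))
      linarith
    · have h1 := happ_le hf n (Z ω)
      have h2 := le_abs_self (f (Z ω))
      have h3 := abs_nonneg (tgl f 0 (Z ω))
      linarith
  · exact Eventually.of_forall fun ω => happ_tendsto hf (Z ω)

theorem sl_to_cx {Ω : Type*} [MeasurableSpace Ω] {Ω' : Type*} [MeasurableSpace Ω']
    (μ : Measure Ω) (μ' : Measure Ω') [IsProbabilityMeasure μ] [IsProbabilityMeasure μ']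
    (X : Ω → ℝ) (Y : Ω' → ℝ) (hX : Integrable X μ) (hY : Integrable Y μ')
    (hmX : ∫ ω, X ω ∂μ = 0) (hmY : ∫ ω, Y ω ∂μ' = 0)
    (hSL : ∀ u : ℝ, ∫ ω, max (X ω - u) 0 ∂μ ≤ ∫ ω, max (Y ω - u) 0 ∂μ')
    (f : ℝ → ℝ) (hf : ConvexOn ℝ Set.univ f)
    (hfX : Integrable (fun ω => f (X ω)) μ) (hfY : Integrable (fun ω => f (Y ω)) μ') :
    ∫ ω, f (X ω) ∂μ ≤ ∫ ω, f (Y ω) ∂μ' := by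
  refine le_of_tendsto_of_tendsto' (happ_integral_tendsto hf μ X hX hfX)
    (happ_integral_tendsto hf μ' Y hY hfY) fun n => ?_
  rw [happ_integral hX hmX n, happ_integral hY hmY n]
  apply add_le_add_right
  exact Finset.sum_le_sum fun k _ =>
    mul_le_mul_of_nonneg_left (hSL (cc f n k)) (coeff_nonneg hf n k)

lemma shift_integral (s : ℝ → ℝ) (u : ℝ) :
    ∫ t in Ioi (0:ℝ), s (u + t) = ∫ t in Ioi u, s t := by
  have h := (measurePreserving_add_left (volume : Measure ℝ) u).setIntegral_preimage_emb
    (measurableEmbedding_addLeft u) s (Ioi u)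
  have hpre : (fun t => u + t) ⁻¹' (Ioi u) = Ioi (0:ℝ) := by
    ext t; simp
  rwa [hpre] at h

lemma shift_integrableOn {s : ℝ → ℝ} {u : ℝ} (h : IntegrableOn s (Ioi u)) :
    IntegrableOn (fun t => s (u + t)) (Ioi (0:ℝ)) := by
  have h2 := ((measurePreserving_add_left (volume : Measure ℝ) u).integrableOn_comp_preimage
    (measurableEmbedding_addLeft u)).mpr h
  have hpre : (fun t => u + t) ⁻¹' (Ioi u) = Ioi (0:ℝ) := by ext t; simp
  rwa [hpre] at h2

lemma stoploss_le_tail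
    {Ω : Type*} [MeasurableSpace Ω] (μ : Measure Ω) [IsProbabilityMeasure μ]
    (Z : Ω → ℝ) (hZ : Integrable Z μ)
    (s : ℝ → ℝ) (hs0 : ∀ t ∈ Ici (0:ℝ), 0 ≤ s t)
    (hint : IntegrableOn s (Ioi 0))
    (htail : ∀ t : ℝ, 0 ≤ t → μ {ω | t < |Z ω|} ≤ ENNReal.ofReal (s t))
    (u : ℝ) (hu : 0 ≤ u) :
    ∫ ω, max (Z ω - u) 0 ∂μ ≤ ∫ t in Ioi u, s t := by
  have hiZ : Integrable (fun ω => max (Z ω - u) 0) μ :=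
    (hZ.sub (integrable_const u)).pos_part
  rw [hiZ.integral_eq_integral_meas_lt (Filter.Eventually.of_forall fun ω => le_max_right _ _),
    ← shift_integral s u]
  have hsub : Ioi u ⊆ Ioi (0:ℝ) := fun x hx => lt_of_le_of_lt hu hx
  have hintu : IntegrableOn (fun t => s (u + t)) (Ioi (0:ℝ)) :=
    shift_integrableOn (hint.mono_set hsub)
  refine integral_mono_of_nonneg (Filter.Eventually.of_forall fun t => ENNReal.toReal_nonneg)
    hintu ?_
  rw [Filter.EventuallyLE, ae_restrict_iff' measurableSet_Ioi]
  refine Filter.Eventually.of_forall fun t ht => ?_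
  have hset : {ω | t < max (Z ω - u) 0} ⊆ {ω | u + t < |Z ω|} := by
    intro ω hω
    simp only [mem_setOf_eq] at hω ⊢
    rcases le_or_gt (Z ω - u) 0 with h | h
    · rw [max_eq_right h] at hω; exact absurd hω (not_lt.mpr (le_of_lt (mem_Ioi.mp ht)))
    · rw [max_eq_left h.le] at hω
      calc u + t < Z ω := by linarith
      _ ≤ |Z ω| := le_abs_self _
  have h1 : μ {ω | t < max (Z ω - u) 0} ≤ ENNReal.ofReal (s (u + t)) :=
    (measure_mono hset).trans (htail (u + t) (by have := mem_Ioi.mp ht; linarith))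
  exact ENNReal.toReal_le_of_le_ofReal (hs0 (u + t) (by simp only [mem_Ici]; linarith [mem_Ioi.mp ht])) h1

lemma abs_exp_le
    {Ω : Type*} [MeasurableSpace Ω] (μ : Measure Ω) [IsProbabilityMeasure μ]
    (Z : Ω → ℝ) (hZ : Integrable Z μ)
    (s : ℝ → ℝ) (hs0 : ∀ t ∈ Ici (0:ℝ), 0 ≤ s t)
    (hint : IntegrableOn s (Ioi 0))
    (htail : ∀ t : ℝ, 0 ≤ t → μ {ω | t < |Z ω|} ≤ ENNReal.ofReal (s t)) :
    ∫ ω, |Z ω| ∂μ ≤ ∫ t in Ioi (0:ℝ), s t := by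
  rw [hZ.abs.integral_eq_integral_meas_lt (Filter.Eventually.of_forall fun ω => abs_nonneg _)]
  refine integral_mono_of_nonneg (Filter.Eventually.of_forall fun t => ENNReal.toReal_nonneg)
    hint ?_
  rw [Filter.EventuallyLE, ae_restrict_iff' measurableSet_Ioi]
  refine Filter.Eventually.of_forall fun t ht => ?_
  exact ENNReal.toReal_le_of_le_ofReal (hs0 t (le_of_lt (mem_Ioi.mp ht)))
    (htail t (le_of_lt (mem_Ioi.mp ht)))

lemma stoploss_le_envelope
    {Ω : Type*} [MeasurableSpace Ω] (μ : Measure Ω) [IsProbabilityMeasure μ]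
    (Z : Ω → ℝ) (hZ : Integrable Z μ) (hmean : ∫ ω, Z ω ∂μ = 0)
    (s : ℝ → ℝ) (hs0 : ∀ t ∈ Ici (0:ℝ), 0 ≤ s t)
    (hint : IntegrableOn s (Ioi 0))
    (htail : ∀ t : ℝ, 0 ≤ t → μ {ω | t < |Z ω|} ≤ ENNReal.ofReal (s t))
    (a : ℝ) (ha : 0 < a)
    (hHa : a * s a + ∫ t in Ioi a, s t = (∫ t in Ioi (0:ℝ), s t) / 2)
    (v : ℝ) (hv : 0 ≤ v) :
    ∫ ω, max (Z ω - v) 0 ∂μ ≤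
      (if v ≤ a then (∫ t in Ioi (0:ℝ), s t) / 2 - s a * v else ∫ t in Ioi v, s t) := by
  split_ifs with hva
  · -- v ≤ a case
    set A := ∫ t in Ioi (0:ℝ), s t with hA
    set θ := v / a with hθ
    have hθ0 : 0 ≤ θ := div_nonneg hv ha.le
    have hθ1 : θ ≤ 1 := (div_le_one ha).mpr hva
    have hθa : θ * a = v := div_mul_cancel₀ v ha.ne'
    have hg0i : Integrable (fun ω => max (Z ω) 0) μ := hZ.pos_part
    have hgai : Integrable (fun ω => max (Z ω - a) 0) μ :=
      (hZ.sub (integrable_const a)).pos_part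
    -- pointwise convexity
    have hpw : ∀ ω, max (Z ω - v) 0 ≤ (1 - θ) * max (Z ω) 0 + θ * max (Z ω - a) 0 := by
      intro ω
      apply max_le
      · have h1 : Z ω - v = (1 - θ) * Z ω + θ * (Z ω - a) := by rw [← hθa]; ring
        rw [h1]
        have := mul_le_mul_of_nonneg_left (le_max_left (Z ω) 0) (by linarith : (0:ℝ) ≤ 1 - θ)
        have := mul_le_mul_of_nonneg_left (le_max_left (Z ω - a) 0) hθ0
        linarith
      · have h1 := mul_nonneg (by linarith : (0:ℝ) ≤ 1 - θ) (le_max_right (Z ω) 0)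
        have h2 := mul_nonneg hθ0 (le_max_right (Z ω - a) 0)
        linarith
    have hcomb : ∫ ω, max (Z ω - v) 0 ∂μ ≤
        (1 - θ) * ∫ ω, max (Z ω) 0 ∂μ + θ * ∫ ω, max (Z ω - a) 0 ∂μ := by
      calc ∫ ω, max (Z ω - v) 0 ∂μ
          ≤ ∫ ω, ((1 - θ) * max (Z ω) 0 + θ * max (Z ω - a) 0) ∂μ :=
            integral_mono ((hZ.sub (integrable_const v)).pos_part)
              ((hg0i.const_mul _).add (hgai.const_mul _)) hpw
        _ = (1 - θ) * ∫ ω, max (Z ω) 0 ∂μ + θ * ∫ ω, max (Z ω - a) 0 ∂μ := by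
            rw [integral_add (hg0i.const_mul _) (hgai.const_mul _),
              integral_const_mul, integral_const_mul]
    -- g0 ≤ A/2
    have h2g0 : 2 * ∫ ω, max (Z ω) 0 ∂μ = ∫ ω, |Z ω| ∂μ := by
      have : ∀ ω, 2 * max (Z ω) 0 = |Z ω| + Z ω := by
        intro ω; rcases le_or_gt (Z ω) 0 with h | h
        · rw [max_eq_right h, abs_of_nonpos h]; ring
        · rw [max_eq_left h.le, abs_of_pos h]; ring
      calc 2 * ∫ ω, max (Z ω) 0 ∂μ = ∫ ω, 2 * max (Z ω) 0 ∂μ := (integral_const_mul _ _).symm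
        _ = ∫ ω, (|Z ω| + Z ω) ∂μ := by exact integral_congr_ae (Filter.Eventually.of_forall this)
        _ = ∫ ω, |Z ω| ∂μ + ∫ ω, Z ω ∂μ := integral_add hZ.abs hZ
        _ = ∫ ω, |Z ω| ∂μ := by rw [hmean, add_zero]
    have hg0 : ∫ ω, max (Z ω) 0 ∂μ ≤ A / 2 := by
      have := abs_exp_le μ Z hZ s hs0 hint htail
      linarith [h2g0]
    -- ga ≤ ∫_{Ioi a} s = A/2 - a * s a
    have hga : ∫ ω, max (Z ω - a) 0 ∂μ ≤ A / 2 - a * s a := by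
      have h1 := stoploss_le_tail μ Z hZ s hs0 hint htail a ha.le
      linarith [hHa]
    calc ∫ ω, max (Z ω - v) 0 ∂μ
        ≤ (1 - θ) * ∫ ω, max (Z ω) 0 ∂μ + θ * ∫ ω, max (Z ω - a) 0 ∂μ := hcomb
      _ ≤ (1 - θ) * (A / 2) + θ * (A / 2 - a * s a) := by
          have h1 := mul_le_mul_of_nonneg_left hg0 (by linarith : (0:ℝ) ≤ 1 - θ)
          have h2 := mul_le_mul_of_nonneg_left hga hθ0
          linarith
      _ = A / 2 - s a * v := by rw [← hθa]; ring
  · exact stoploss_le_tail μ Z hZ s hs0 hint htail v hv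

lemma flip_identity
    {Ω : Type*} [MeasurableSpace Ω] (μ : Measure Ω) [IsProbabilityMeasure μ]
    (Z : Ω → ℝ) (hZ : Integrable Z μ) (hmean : ∫ ω, Z ω ∂μ = 0) (u : ℝ) :
    ∫ ω, max (Z ω - u) 0 ∂μ = -u + ∫ ω, max (-Z ω - (-u)) 0 ∂μ := by
  have hpw : ∀ ω, max (Z ω - u) 0 = (Z ω - u) + max (-Z ω - (-u)) 0 := by
    intro ω; rcases le_or_gt u (Z ω) with h | h
    · rw [max_eq_left (by linarith), max_eq_right (by linarith)]; ring
    · rw [max_eq_right (by linarith), max_eq_left (by linarith)]; ring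
  have hi1 : Integrable (fun ω => Z ω - u) μ := hZ.sub (integrable_const u)
  have hi2 : Integrable (fun ω => max (-Z ω - (-u)) 0) μ :=
    (hZ.neg.sub (integrable_const (-u))).pos_part
  rw [integral_congr_ae (Filter.Eventually.of_forall hpw), integral_add hi1 hi2,
    integral_sub hZ (integrable_const u), hmean]
  simp

lemma neg_symm_integral
    {Ω' : Type*} [MeasurableSpace Ω'] (μ' : Measure Ω')
    (Y : Ω' → ℝ) (hYmeas : AEMeasurable Y μ')
    (hYsymm : Measure.map Y μ' = Measure.map (fun ω => -Y ω) μ')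
    (g : ℝ → ℝ) (hg : Continuous g) :
    ∫ ω, g (-Y ω) ∂μ' = ∫ ω, g (Y ω) ∂μ' := by
  rw [← integral_map (φ := fun ω => -Y ω) hYmeas.neg hg.aestronglyMeasurable, ← hYsymm,
    integral_map hYmeas hg.aestronglyMeasurable]

lemma EY_zero
    {Ω' : Type*} [MeasurableSpace Ω'] (μ' : Measure Ω')
    (Y : Ω' → ℝ) (hYmeas : AEMeasurable Y μ')
    (hYsymm : Measure.map Y μ' = Measure.map (fun ω => -Y ω) μ') :
    ∫ ω, Y ω ∂μ' = 0 := by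
  have h := neg_symm_integral μ' Y hYmeas hYsymm id continuous_id
  simp only [id_eq] at h
  have h2 : ∫ ω, -Y ω ∂μ' = -∫ ω, Y ω ∂μ' := integral_neg _
  linarith [h, h2]
/-- From envelope domination to convex domination: in the setting of the sharp stop-loss
envelope, let `X` be integrable with `E[X] = 0` and `P(|X| > t) ≤ s(t)` for `t ≥ 0`, and
let `Y` be integrable and symmetric about `0`. If `g_Y(u) = E[(Y − u)₊] ≥ J_s(u)` for all
`u ≥ 0`, then `X ⪯_cx Y`: `E[f(X)] ≤ E[f(Y)]` for every convex `f : ℝ → ℝ` for which both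
expectations are finite. -/
theorem stmt7
    (s : ℝ → ℝ)
    (hs01 : ∀ t ∈ Set.Ici (0 : ℝ), s t ∈ Set.Icc (0 : ℝ) 1)
    (hmono : AntitoneOn s (Set.Ici 0))
    (hcont : ContinuousOn s (Set.Ici 0))
    (hint : IntegrableOn s (Set.Ioi 0))
    (a : ℝ) (ha : 0 < a)
    (hHa : a * s a + ∫ t in Set.Ioi a, s t = (∫ t in Set.Ioi (0 : ℝ), s t) / 2)
    {Ω : Type*} [MeasurableSpace Ω] (μ : Measure Ω) [IsProbabilityMeasure μ]
    {Ω' : Type*} [MeasurableSpace Ω'] (μ' : Measure Ω') [IsProbabilityMeasure μ']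
    (X : Ω → ℝ) (hXint : Integrable X μ) (hmean : ∫ ω, X ω ∂μ = 0)
    (htail : ∀ t : ℝ, 0 ≤ t → μ {ω | t < |X ω|} ≤ ENNReal.ofReal (s t))
    (Y : Ω' → ℝ) (hYint : Integrable Y μ')
    (hYmeas : AEMeasurable Y μ')
    (hYsymm : Measure.map Y μ' = Measure.map (fun ω => -Y ω) μ')
    (hdom : ∀ u : ℝ, 0 ≤ u →
      (if u ≤ a then (∫ t in Set.Ioi (0 : ℝ), s t) / 2 - s a * u
       else ∫ t in Set.Ioi u, s t) ≤ ∫ ω, max (Y ω - u) 0 ∂μ') :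
    ∀ f : ℝ → ℝ, ConvexOn ℝ Set.univ f →
      Integrable (fun ω => f (X ω)) μ → Integrable (fun ω => f (Y ω)) μ' →
      ∫ ω, f (X ω) ∂μ ≤ ∫ ω, f (Y ω) ∂μ' := by
  intro f hf hfX hfY
  have hs0 : ∀ t ∈ Set.Ici (0:ℝ), 0 ≤ s t := fun t ht => (hs01 t ht).1
  have hEY : ∫ ω, Y ω ∂μ' = 0 := EY_zero μ' Y hYmeas hYsymm
  have hSL : ∀ u : ℝ, ∫ ω, max (X ω - u) 0 ∂μ ≤ ∫ ω, max (Y ω - u) 0 ∂μ' := by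
    intro u
    rcases le_or_gt 0 u with hu | hu
    · exact (stoploss_le_envelope μ X hXint hmean s hs0 hint htail a ha hHa u hu).trans
        (hdom u hu)
    · have hv : (0:ℝ) ≤ -u := by linarith
      have h1 := flip_identity μ X hXint hmean u
      have htail' : ∀ t : ℝ, 0 ≤ t → μ {ω | t < |(-X ·) ω|} ≤ ENNReal.ofReal (s t) := by
        intro t ht
        have : {ω | t < |(-X ·) ω|} = {ω | t < |X ω|} := by
          ext ω; simp [abs_neg]
        rw [this]; exact htail t ht
      have h2 := stoploss_le_envelope μ (fun ω => -X ω) hXint.neg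
        (by rw [integral_neg, hmean, neg_zero]) s hs0 hint htail' a ha hHa (-u) hv
      have h3 := flip_identity μ' Y hYint hEY u
      have h4 : ∫ ω, max (-Y ω - (-u)) 0 ∂μ' = ∫ ω, max (Y ω - (-u)) 0 ∂μ' :=
        neg_symm_integral μ' Y hYmeas hYsymm (fun x => max (x - (-u)) 0)
          ((continuous_id.sub continuous_const).max continuous_const)
      have h5 := hdom (-u) hv
      rw [h1, h3, h4]
      exact add_le_add_right (h2.trans h5) _
  exact sl_to_cx μ μ' X Y hXint hYint hmean hEY hSL f hf hfX hfY
end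

section
/- Let t₀ = √(2 log 2), B = t₀/2 + ∫_{t₀}^∞ e^{-t²/2} dt, H(x) = 2x e^{-x²/2} + 2∫_x^∞ e^{-t²/2} dt, and let a > t₀ be the unique solution of H(a) = B. Let p₀ = 2e^{-a²/2}, let z satisfy Φ̄(z) = p₀, and let c₀ = B/φ(z). Then a > √(2 log 4) (in particular a > √2), p₀ < 1/2 (so z > 0), and c₀ > √2. -/
open MeasureTheory Real Set

/-- The standard normal density `φ(x) = (2π)^{-1/2} e^{-x²/2}`. -/
noncomputable def stdNormalPDF (x : ℝ) : ℝ :=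
  (Real.sqrt (2 * Real.pi))⁻¹ * Real.exp (-x ^ 2 / 2)

/-- The Gaussian tail `Φ̄(x) = ∫_x^∞ φ(t) dt`. -/
noncomputable def gaussTail (x : ℝ) : ℝ := ∫ t in Set.Ioi x, stdNormalPDF t

/-- `B = t₀/2 + ∫_{t₀}^∞ e^{-t²/2} dt` with `t₀ = √(2 log 2)`. -/
noncomputable def Bconst : ℝ :=
  Real.sqrt (2 * Real.log 2) / 2 +
    ∫ t in Set.Ioi (Real.sqrt (2 * Real.log 2)), Real.exp (-t ^ 2 / 2)

/-- `H(x) = 2x e^{-x²/2} + 2 ∫_x^∞ e^{-t²/2} dt`. -/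
noncomputable def Hfun (x : ℝ) : ℝ :=
  2 * x * Real.exp (-x ^ 2 / 2) + 2 * ∫ t in Set.Ioi x, Real.exp (-t ^ 2 / 2)

lemma exp_sq_integrable : Integrable (fun t : ℝ => Real.exp (-t ^ 2 / 2)) := by
  have h := integrable_exp_neg_mul_sq (show (0:ℝ) < 1/2 by norm_num)
  exact h.congr (Filter.Eventually.of_forall fun t => by norm_num; ring_nf)

lemma tail_pos (x : ℝ) : 0 < ∫ t in Ioi x, Real.exp (-t ^ 2 / 2) := by
  rw [setIntegral_pos_iff_support_of_nonneg_ae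
    (Filter.Eventually.of_forall fun t => (Real.exp_pos _).le) exp_sq_integrable.integrableOn]
  have hs : Function.support (fun t : ℝ => Real.exp (-t ^ 2 / 2)) = Set.univ := by
    ext t; simp [Real.exp_ne_zero]
  rw [hs, Set.univ_inter]
  simp [Real.volume_Ioi]

lemma tail_split {x y : ℝ} (h : x ≤ y) :
    ∫ t in Ioi x, Real.exp (-t ^ 2 / 2) =
      (∫ t in Ioc x y, Real.exp (-t ^ 2 / 2)) + ∫ t in Ioi y, Real.exp (-t ^ 2 / 2) := by
  rw [← Set.Ioc_union_Ioi_eq_Ioi h,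
    setIntegral_union (Set.Ioc_disjoint_Ioi le_rfl) measurableSet_Ioi
      exp_sq_integrable.integrableOn exp_sq_integrable.integrableOn]

lemma half_gauss : ∫ t in Ioi (0:ℝ), Real.exp (-t ^ 2 / 2) = Real.sqrt (2 * π) / 2 := by
  have h := integral_gaussian_Ioi (1/2)
  have heq : ∀ t : ℝ, Real.exp (-(1/2) * t ^ 2) = Real.exp (-t ^ 2 / 2) := fun t => by ring_nf
  rw [show π / (1/2) = 2 * π by ring] at h
  rw [← h]
  exact setIntegral_congr_fun measurableSet_Ioi fun t _ => (heq t).symm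


/-- Crude bounds on the sub-Gaussian comparison parameters: with `a > t₀ = √(2 log 2)` the
solution of `H(a) = B`, `p₀ = 2e^{-a²/2}`, `Φ̄(z) = p₀` and `c₀ = B/φ(z)`, one has
`a > √(2 log 4)` (in particular `a > √2`), `p₀ < 1/2` (so `z > 0`), and `c₀ > √2`. -/
theorem stmt9
    (a z c₀ : ℝ)
    (ha : Real.sqrt (2 * Real.log 2) < a) (hHa : Hfun a = Bconst)
    (hz : gaussTail z = 2 * Real.exp (-a ^ 2 / 2))
    (hc₀ : c₀ = Bconst / stdNormalPDF z) :
    Real.sqrt (2 * Real.log 4) < a ∧ Real.sqrt 2 < a ∧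
      2 * Real.exp (-a ^ 2 / 2) < 1 / 2 ∧ 0 < z ∧ Real.sqrt 2 < c₀ := by
  set t₀ := Real.sqrt (2 * Real.log 2) with ht₀
  set s := Real.sqrt (2 * Real.log 4) with hs
  have hlog2 : (0:ℝ) < Real.log 2 := Real.log_pos (by norm_num)
  have hlog4 : (1:ℝ) < Real.log 4 := by
    rw [Real.lt_log_iff_exp_lt (by norm_num)]
    have := Real.exp_one_lt_d9
    linarith
  have ht₀sq : t₀ ^ 2 = 2 * Real.log 2 := Real.sq_sqrt (by positivity)
  have hssq : s ^ 2 = 2 * Real.log 4 := Real.sq_sqrt (by positivity)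
  have ht₀pos : 0 < t₀ := Real.sqrt_pos.mpr (by positivity)
  have hspos : 0 < s := Real.sqrt_pos.mpr (by positivity)
  have hapos : 0 < a := ht₀pos.trans ha
  have hexp_t₀ : Real.exp (-t₀ ^ 2 / 2) = 1/2 := by
    rw [ht₀sq, show -(2*Real.log 2)/2 = -Real.log 2 by ring, Real.exp_neg,
      Real.exp_log (by norm_num)]
    norm_num
  have hexp_s : Real.exp (-s ^ 2 / 2) = 1/4 := by
    rw [hssq, show -(2*Real.log 4)/2 = -Real.log 4 by ring, Real.exp_neg,
      Real.exp_log (by norm_num)]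
    norm_num
  -- Step 1: s < a
  have hsa : s < a := by
    by_contra hcon
    push_neg at hcon
    have h1 : (1:ℝ)/4 ≤ Real.exp (-a^2/2) := by
      rw [← hexp_s]
      apply Real.exp_le_exp.mpr
      have : a^2 ≤ s^2 := by nlinarith
      linarith
    have hIoc : ∫ t in Ioc t₀ a, Real.exp (-t^2/2) ≤ (a - t₀) * (1/2) := by
      have hb : ∫ t in Ioc t₀ a, (1/2 : ℝ) = (a - t₀) * (1/2) := by
        rw [setIntegral_const, Real.volume_real_Ioc_of_le (by linarith)]
        simp [smul_eq_mul]
      rw [← hb]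
      apply setIntegral_mono_on exp_sq_integrable.integrableOn
        (integrableOn_const (by rw [Real.volume_Ioc]; exact ENNReal.ofReal_ne_top))
        measurableSet_Ioc
      intro t ht
      rw [← hexp_t₀]
      apply Real.exp_le_exp.mpr
      have h2 : t₀ ≤ t := ht.1.le
      have : t₀^2 ≤ t^2 := by nlinarith
      linarith
    have hsplit := tail_split ha.le
    have hIa := tail_pos a
    have h3 : a/2 ≤ 2 * a * Real.exp (-a^2/2) := by nlinarith
    have : Hfun a > Bconst := by
      rw [Hfun, Bconst, ← ht₀, hsplit]
      nlinarith
    linarith [hHa.le, this]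
  have hsqrt2s : Real.sqrt 2 < s := by
    rw [hs, show (2:ℝ) = 2 * 1 by ring]
    exact Real.sqrt_lt_sqrt (by norm_num) (by linarith)
  have hsqrt2a : Real.sqrt 2 < a := hsqrt2s.trans hsa
  -- Step 3: p₀ < 1/2
  have hp : 2 * Real.exp (-a ^ 2 / 2) < 1 / 2 := by
    have : Real.exp (-a^2/2) < 1/4 := by
      rw [← hexp_s]
      apply Real.exp_lt_exp.mpr
      have : s^2 < a^2 := by nlinarith
      linarith
    linarith
  -- Step 4: 0 < z
  have hstdInt : Integrable stdNormalPDF := by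
    have := exp_sq_integrable.const_mul (Real.sqrt (2 * π))⁻¹
    exact this.congr (Filter.Eventually.of_forall fun t => rfl)
  have hg0 : gaussTail 0 = 1/2 := by
    rw [gaussTail]
    simp only [stdNormalPDF]
    rw [integral_const_mul, half_gauss]
    have h2π : (0:ℝ) < Real.sqrt (2 * π) := Real.sqrt_pos.mpr (by positivity)
    field_simp
  have hzpos : 0 < z := by
    by_contra hcon
    push_neg at hcon
    have hsplitz : gaussTail z = (∫ t in Ioc z 0, stdNormalPDF t) + gaussTail 0 := by
      rw [gaussTail, gaussTail, ← Set.Ioc_union_Ioi_eq_Ioi hcon,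
        setIntegral_union (Set.Ioc_disjoint_Ioi le_rfl) measurableSet_Ioi
          hstdInt.integrableOn hstdInt.integrableOn]
    have hnn : 0 ≤ ∫ t in Ioc z 0, stdNormalPDF t :=
      setIntegral_nonneg measurableSet_Ioc fun t _ => by
        rw [stdNormalPDF]; positivity
    rw [hsplitz, hg0] at hz
    linarith
  -- Step 5: √2 < c₀
  have hφpos : 0 < stdNormalPDF z := by rw [stdNormalPDF]; positivity
  have h2π : (0:ℝ) < Real.sqrt (2 * π) := Real.sqrt_pos.mpr (by positivity)
  have hφle : stdNormalPDF z ≤ (Real.sqrt (2 * π))⁻¹ := by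
    rw [stdNormalPDF]
    calc (Real.sqrt (2 * π))⁻¹ * Real.exp (-z ^ 2 / 2)
        ≤ (Real.sqrt (2 * π))⁻¹ * 1 := by
          apply mul_le_mul_of_nonneg_left _ (by positivity)
          rw [Real.exp_le_one_iff]
          nlinarith
      _ = (Real.sqrt (2 * π))⁻¹ := mul_one _
  have hB : t₀ / 2 < Bconst := by
    rw [Bconst, ← ht₀]
    linarith [tail_pos t₀]
  have hBpos : 0 < Bconst := by linarith
  have hc : Bconst * Real.sqrt (2 * π) ≤ c₀ := by
    rw [hc₀]
    calc Bconst * Real.sqrt (2 * π) = Bconst / (Real.sqrt (2 * π))⁻¹ := by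
          rw [div_eq_mul_inv, inv_inv]
      _ ≤ Bconst / stdNormalPDF z :=
          div_le_div_of_nonneg_left hBpos.le hφpos hφle
  have hkey : Real.sqrt 2 < t₀ / 2 * Real.sqrt (2 * π) := by
    have h1 : t₀ * Real.sqrt (2 * π) = Real.sqrt ((2 * Real.log 2) * (2 * π)) :=
      (Real.sqrt_mul (by positivity) _).symm
    have h2 : (2 * Real.log 2) * (2 * π) = 4 * (π * Real.log 2) := by ring
    have h3 : Real.sqrt (4 * (π * Real.log 2)) = 2 * Real.sqrt (π * Real.log 2) := by
      rw [Real.sqrt_mul (by norm_num), show Real.sqrt 4 = 2 by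
        rw [show (4:ℝ) = 2^2 by norm_num, Real.sqrt_sq (by norm_num)]]
    have h4 : t₀ / 2 * Real.sqrt (2 * π) = Real.sqrt (π * Real.log 2) := by
      rw [div_mul_eq_mul_div, h1, h2, h3]; ring
    rw [h4]
    apply Real.sqrt_lt_sqrt (by norm_num)
    have hπ : (3.141592:ℝ) < π := Real.pi_gt_d6
    have hl : (0.6931471803:ℝ) < Real.log 2 := Real.log_two_gt_d9
    have h5 := mul_lt_mul'' hπ hl (by norm_num) (by norm_num)
    have h6 : (2:ℝ) < 3.141592 * 0.6931471803 := by norm_num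
    linarith
  have hfin : t₀ / 2 * Real.sqrt (2 * π) < Bconst * Real.sqrt (2 * π) :=
    mul_lt_mul_of_pos_right hB h2π
  exact ⟨hsa, hsqrt2a, hp, hzpos, by linarith⟩
end

section
/- Let c₀ be the sharp sub-Gaussian comparison constant, G standard normal, and g_{c₀}(u) = E[(c₀·G − u)₊]. Then g_{c₀}(u) ≥ B − p₀·u for all u ∈ ℝ, where B and p₀ are the sub-Gaussian envelope parameters. -/
open MeasureTheory ProbabilityTheory Real Set

lemma stdNormalPDF_pos (x : ℝ) : 0 < stdNormalPDF x := by
  unfold stdNormalPDF; positivity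

lemma stdNormalPDF_eq (x : ℝ) :
    stdNormalPDF x = (Real.sqrt (2 * Real.pi))⁻¹ * Real.exp (-(1/2) * x ^ 2) := by
  rw [stdNormalPDF]; ring_nf

lemma continuous_stdNormalPDF : Continuous stdNormalPDF := by
  unfold stdNormalPDF; continuity

lemma integrable_stdNormalPDF : Integrable stdNormalPDF := by
  have h := (integrable_exp_neg_mul_sq (by norm_num : (0:ℝ) < 1/2)).const_mul
    (Real.sqrt (2 * Real.pi))⁻¹
  apply h.congr
  filter_upwards with x
  rw [stdNormalPDF_eq]

lemma integrable_id_mul_stdNormalPDF : Integrable (fun x => x * stdNormalPDF x) := by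
  have h := (integrable_mul_exp_neg_mul_sq (by norm_num : (0:ℝ) < 1/2)).const_mul
    (Real.sqrt (2 * Real.pi))⁻¹
  apply h.congr
  filter_upwards with x
  rw [stdNormalPDF_eq]; ring

lemma hasDerivAt_neg_pdf (x : ℝ) :
    HasDerivAt (fun y => -stdNormalPDF y) (x * stdNormalPDF x) x := by
  have h1 : HasDerivAt (fun y : ℝ => -y ^ 2 / 2) (-x) x := by
    have h := (hasDerivAt_pow 2 x).neg.div_const 2
    refine h.congr_deriv ?_
    push_cast; ring
  have h4 := ((h1.exp.const_mul (Real.sqrt (2 * Real.pi))⁻¹)).neg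
  refine h4.congr_deriv ?_
  simp only [stdNormalPDF]; ring

lemma tendsto_pdf : Filter.Tendsto stdNormalPDF Filter.atTop (nhds 0) := by
  have h1 : Filter.Tendsto (fun x : ℝ => x ^ 2 / 2) Filter.atTop Filter.atTop :=
    (Filter.tendsto_pow_atTop two_ne_zero).atTop_div_const (by norm_num)
  have h2 : Filter.Tendsto (fun x : ℝ => Real.exp (-(x ^ 2 / 2))) Filter.atTop (nhds 0) :=
    Real.tendsto_exp_neg_atTop_nhds_zero.comp h1
  have h3 := h2.const_mul (Real.sqrt (2 * Real.pi))⁻¹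
  rw [mul_zero] at h3
  refine h3.congr fun x => ?_
  rw [stdNormalPDF, neg_div]

lemma integral_Ioi_id_mul_pdf (z : ℝ) :
    ∫ x in Set.Ioi z, x * stdNormalPDF x = stdNormalPDF z := by
  have h := integral_Ioi_of_hasDerivAt_of_tendsto' (a := z) (m := 0)
    (f := fun y => -stdNormalPDF y) (f' := fun x => x * stdNormalPDF x)
    (fun x _ => hasDerivAt_neg_pdf x) integrable_id_mul_stdNormalPDF.integrableOn
    (by simpa using tendsto_pdf.neg)
  simpa using h


/-- Tangent-line lower bound for the Gaussian stop-loss: with `c₀` the sharp sub-Gaussian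
comparison constant and `G` standard normal, `g_{c₀}(u) = E[(c₀G − u)₊] ≥ B − p₀ u` for all
`u ∈ ℝ`, where `B` and `p₀ = 2e^{-a²/2}` are the sub-Gaussian envelope parameters. -/
theorem stmt12
    (a z c₀ : ℝ)
    (ha : Real.sqrt (2 * Real.log 2) < a) (hHa : Hfun a = Bconst)
    (hz : gaussTail z = 2 * Real.exp (-a ^ 2 / 2))
    (hc₀ : c₀ = Bconst / stdNormalPDF z) :
    ∀ u : ℝ, Bconst - 2 * Real.exp (-a ^ 2 / 2) * u ≤
      ∫ x, max (c₀ * x - u) 0 ∂(gaussianReal 0 1) := by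
  intro u
  -- rewrite the gaussian integral as a Lebesgue integral against the pdf
  have hpdf : ∀ x, gaussianPDFReal 0 1 x = stdNormalPDF x := by
    intro x
    simp [gaussianPDFReal, stdNormalPDF]
  have hγ : gaussianReal 0 1 =
      volume.withDensity (fun x => ((stdNormalPDF x).toNNReal : ENNReal)) := by
    rw [gaussianReal_of_var_ne_zero _ one_ne_zero]
    congr 1
    funext x
    rw [gaussianPDF, hpdf]
    rfl
  have hmeas : Measurable fun x => Real.toNNReal (stdNormalPDF x) :=
    continuous_stdNormalPDF.measurable.real_toNNReal
  have key : ∫ x, max (c₀ * x - u) 0 ∂(gaussianReal 0 1)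
      = ∫ x, stdNormalPDF x * max (c₀ * x - u) 0 := by
    rw [hγ, integral_withDensity_eq_integral_smul hmeas]
    refine integral_congr_ae (Filter.Eventually.of_forall fun x => ?_)
    simp [NNReal.smul_def, Real.coe_toNNReal _ (stdNormalPDF_pos x).le]
  rw [key]
  -- integrability of the integrand
  set F : ℝ → ℝ := fun x => stdNormalPDF x * max (c₀ * x - u) 0 with hF
  have hFnonneg : ∀ x, 0 ≤ F x := fun x =>
    mul_nonneg (stdNormalPDF_pos x).le (le_max_right _ _)
  have hbound : Integrable (fun x => |c₀| * |x * stdNormalPDF x| + |u| * stdNormalPDF x) :=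
    (integrable_id_mul_stdNormalPDF.abs.const_mul _).add (integrable_stdNormalPDF.const_mul _)
  have hFint : Integrable F := by
    refine Integrable.mono' hbound ?_ (Filter.Eventually.of_forall fun x => ?_)
    · exact (continuous_stdNormalPDF.mul (((continuous_const.mul continuous_id').sub
        continuous_const).max continuous_const)).aestronglyMeasurable
    · have h1 : max (c₀ * x - u) 0 ≤ |c₀| * |x| + |u| := by
        refine max_le ?_ (by positivity)
        calc c₀ * x - u ≤ |c₀ * x - u| := le_abs_self _
          _ ≤ |c₀ * x| + |u| := abs_sub _ _
          _ = |c₀| * |x| + |u| := by rw [abs_mul]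
      have hp := (stdNormalPDF_pos x).le
      rw [Real.norm_eq_abs, abs_of_nonneg (hFnonneg x)]
      calc F x ≤ stdNormalPDF x * (|c₀| * |x| + |u|) :=
            mul_le_mul_of_nonneg_left h1 hp
        _ = |c₀| * |x * stdNormalPDF x| + |u| * stdNormalPDF x := by
            rw [abs_mul, abs_of_nonneg hp]; ring
  -- integrability of the linear comparison on Ioi z
  have hlin : Integrable (fun x => stdNormalPDF x * (c₀ * x - u)) := by
    have h := (integrable_id_mul_stdNormalPDF.const_mul c₀).sub
      (integrable_stdNormalPDF.const_mul u)
    refine h.congr (Filter.Eventually.of_forall fun x => ?_)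
    simp only [Pi.sub_apply]
    ring
  -- main chain of inequalities
  have step1 : ∫ x in Set.Ioi z, F x ≤ ∫ x, F x :=
    setIntegral_le_integral hFint (Filter.Eventually.of_forall hFnonneg)
  have step2 : ∫ x in Set.Ioi z, stdNormalPDF x * (c₀ * x - u) ≤ ∫ x in Set.Ioi z, F x := by
    refine setIntegral_mono_on hlin.integrableOn hFint.integrableOn measurableSet_Ioi
      fun x _ => ?_
    exact mul_le_mul_of_nonneg_left (le_max_left _ _) (stdNormalPDF_pos x).le
  have step3 : ∫ x in Set.Ioi z, stdNormalPDF x * (c₀ * x - u)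
      = c₀ * stdNormalPDF z - u * gaussTail z := by
    have heq : ∀ x : ℝ, stdNormalPDF x * (c₀ * x - u)
        = c₀ * (x * stdNormalPDF x) - u * stdNormalPDF x := fun x => by ring
    rw [setIntegral_congr_fun measurableSet_Ioi fun x _ => heq x,
      integral_sub ((integrable_id_mul_stdNormalPDF.const_mul c₀).integrableOn)
        ((integrable_stdNormalPDF.const_mul u).integrableOn),
      integral_const_mul, integral_const_mul, integral_Ioi_id_mul_pdf, gaussTail]
  have hBz : c₀ * stdNormalPDF z = Bconst := by
    rw [hc₀, div_mul_cancel₀ _ (stdNormalPDF_pos z).ne']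
  calc Bconst - 2 * Real.exp (-a ^ 2 / 2) * u
      = c₀ * stdNormalPDF z - u * gaussTail z := by rw [hBz, hz]; ring
    _ ≤ ∫ x in Set.Ioi z, F x := step3 ▸ step2
    _ ≤ ∫ x, F x := step1
end
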